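/- arXiv:1709.10029 — 3 statements merged into one kernel-verified Lean document; each statement's English description precedes it below -/
import Mathlib

section
/- Let X ∈ R^{n×p}, Y ∈ R^n, γ > 0, and 1 ≤ k ≤ p. The minimum of (1/(2γ))‖w‖₂² + (1/2)‖Y − Xw‖₂² over w ∈ R^p with at most k nonzero entries equals the minimum over binary vectors s ∈ {0,1}^p with ∑_j s_j ≤ k of (1/2) Yᵀ (I_n + γ ∑_{j=1}^p s_j X_j X_jᵀ)⁻¹ Y, where X_j denotes the j-th column of X. -/
open Matrix

namespace Stmt4Aux

variable {n p : ℕ}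

def cc (X : Matrix (Fin n) (Fin p) ℝ) (j : Fin p) : Fin n → ℝ := fun i => X i j

noncomputable def MM (X : Matrix (Fin n) (Fin p) ℝ) (s : Fin p → ℝ) :
    Matrix (Fin n) (Fin n) ℝ :=
  ∑ j : Fin p, s j • vecMulVec (cc X j) (cc X j)

noncomputable def AA (X : Matrix (Fin n) (Fin p) ℝ) (γ : ℝ) (s : Fin p → ℝ) :
    Matrix (Fin n) (Fin n) ℝ :=
  1 + γ • MM X s

lemma mulVec_eq (X : Matrix (Fin n) (Fin p) ℝ) (u : Fin p → ℝ) (i : Fin n) :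
    (X *ᵥ u) i = ∑ j, u j * X i j := by
  simp [mulVec, dotProduct, mul_comm]

lemma dot_mulVec' (X : Matrix (Fin n) (Fin p) ℝ) (x : Fin n → ℝ) (u : Fin p → ℝ) :
    x ⬝ᵥ (X *ᵥ u) = ∑ j, u j * (cc X j ⬝ᵥ x) := by
  simp only [dotProduct, mulVec_eq, cc, Finset.mul_sum]
  rw [Finset.sum_comm]
  exact Finset.sum_congr rfl fun j _ => Finset.sum_congr rfl fun i _ => by ring

lemma MM_mulVec (X : Matrix (Fin n) (Fin p) ℝ) (s : Fin p → ℝ) (x : Fin n → ℝ) :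
    MM X s *ᵥ x = X *ᵥ (fun j => s j * (cc X j ⬝ᵥ x)) := by
  funext i
  rw [mulVec_eq]
  simp only [MM, mulVec, dotProduct, Matrix.sum_apply, Matrix.smul_apply, vecMulVec_apply,
    cc, smul_eq_mul]
  simp_rw [Finset.mul_sum]
  rw [Finset.sum_comm]
  exact Finset.sum_congr rfl fun j _ => Finset.sum_congr rfl fun i' _ => by ring

lemma dot_MM (X : Matrix (Fin n) (Fin p) ℝ) (s : Fin p → ℝ) (x : Fin n → ℝ) :
    x ⬝ᵥ (MM X s *ᵥ x) = ∑ j, s j * (cc X j ⬝ᵥ x) ^ 2 := by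
  rw [MM_mulVec, dot_mulVec']
  exact Finset.sum_congr rfl fun j _ => by ring

lemma AA_posDef (X : Matrix (Fin n) (Fin p) ℝ) {γ : ℝ} (hγ : 0 < γ) {s : Fin p → ℝ}
    (hs : ∀ j, 0 ≤ s j) : (AA X γ s).PosDef := by
  rw [Matrix.posDef_iff_dotProduct_mulVec]
  constructor
  · show (AA X γ s)ᴴ = AA X γ s
    ext i i'
    simp only [AA, MM, conjTranspose_apply, Matrix.add_apply, Matrix.smul_apply,
      Matrix.sum_apply, vecMulVec_apply, Matrix.one_apply, star_trivial, smul_eq_mul, cc]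
    have h0 : (if i' = i then (1:ℝ) else 0) = (if i = i' then 1 else 0) := by
      simp [eq_comm]
    rw [h0]
    congr 1
    exact congrArg (γ * ·) (Finset.sum_congr rfl fun j _ => by ring)
  · intro x hx
    have h1 : AA X γ s *ᵥ x = x + γ • (MM X s *ᵥ x) := by
      simp [AA, add_mulVec, smul_mulVec]
    rw [star_trivial, h1, dotProduct_add, dotProduct_smul, dot_MM, smul_eq_mul]
    have h2 : 0 ≤ γ * ∑ j, s j * (cc X j ⬝ᵥ x) ^ 2 := by
      apply mul_nonneg hγ.le
      exact Finset.sum_nonneg fun j _ => mul_nonneg (hs j) (sq_nonneg _)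
    have h3 : 0 < x ⬝ᵥ x :=
      lt_of_le_of_ne (Finset.sum_nonneg fun i _ => mul_self_nonneg _)
        (fun h => hx (dotProduct_self_eq_zero.mp h.symm))
    linarith

end Stmt4Aux

namespace Stmt4Aux
open Matrix

lemma AA_mulVec_inv (X : Matrix (Fin n) (Fin p) ℝ) {γ : ℝ} (hγ : 0 < γ) {s : Fin p → ℝ}
    (hs : ∀ j, 0 ≤ s j) (Y : Fin n → ℝ) :
    AA X γ s *ᵥ ((AA X γ s)⁻¹ *ᵥ Y) = Y := by
  rw [mulVec_mulVec,
    Matrix.mul_nonsing_inv _ ((AA_posDef X hγ hs).det_pos.ne'.isUnit), one_mulVec]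

lemma key (X : Matrix (Fin n) (Fin p) ℝ) {γ : ℝ} (hγ : 0 < γ) {s : Fin p → ℝ}
    (hs : ∀ j, s j = 0 ∨ s j = 1) (Y v : Fin n → ℝ) (hv : AA X γ s *ᵥ v = Y)
    (w : Fin p → ℝ) (hw : ∀ j, s j = 0 → w j = 0) :
    (1 / (2 * γ)) * (w ⬝ᵥ w) + (1 / 2) * ((Y - X *ᵥ w) ⬝ᵥ (Y - X *ᵥ w))
      = (1 / 2) * (Y ⬝ᵥ v)
        + (1 / (2 * γ)) *
            ((w - γ • fun j => s j * (cc X j ⬝ᵥ v)) ⬝ᵥ (w - γ • fun j => s j * (cc X j ⬝ᵥ v)))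
        + (1 / 2) *
            ((X *ᵥ (w - γ • fun j => s j * (cc X j ⬝ᵥ v))) ⬝ᵥ
              (X *ᵥ (w - γ • fun j => s j * (cc X j ⬝ᵥ v)))) := by
  set t : Fin p → ℝ := fun j => s j * (cc X j ⬝ᵥ v) with ht
  set u : Fin p → ℝ := γ • t with hu
  set d : Fin p → ℝ := w - u with hd
  have hwu : w = u + d := by rw [hd]; abel
  have hXu : X *ᵥ u = γ • (MM X s *ᵥ v) := by
    rw [hu, mulVec_smul, MM_mulVec]
  have hY : Y = v + γ • (MM X s *ᵥ v) := by
    rw [← hv]; simp [AA, add_mulVec, smul_mulVec]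
  have hRes : Y - X *ᵥ w = v - X *ᵥ d := by
    rw [hwu, mulVec_add, hXu, hY]; abel
  have e1 : w ⬝ᵥ w = u ⬝ᵥ u + 2 * (u ⬝ᵥ d) + d ⬝ᵥ d := by
    rw [hwu]
    simp only [add_dotProduct, dotProduct_add, dotProduct_comm d u]
    ring
  have e2 : (v - X *ᵥ d) ⬝ᵥ (v - X *ᵥ d)
      = v ⬝ᵥ v - 2 * (v ⬝ᵥ (X *ᵥ d)) + (X *ᵥ d) ⬝ᵥ (X *ᵥ d) := by
    simp only [sub_dotProduct, dotProduct_sub, dotProduct_comm (X *ᵥ d) v]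
    ring
  have cross : u ⬝ᵥ d = γ * (v ⬝ᵥ (X *ᵥ d)) := by
    rw [dot_mulVec' X v d, dotProduct, Finset.mul_sum]
    refine Finset.sum_congr rfl fun j _ => ?_
    have hdj : d j = w j - γ * t j := rfl
    rcases hs j with h0 | h1
    · have : d j = 0 := by rw [hdj, hw j h0, ht]; simp [h0]
      simp [hu, this, Pi.smul_apply, smul_eq_mul]
    · show γ * t j * d j = γ * (d j * (cc X j ⬝ᵥ v))
      rw [ht]; simp only [h1]; ring
  have quad : u ⬝ᵥ u = γ * (γ * (v ⬝ᵥ (MM X s *ᵥ v))) := by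
    rw [dot_MM, dotProduct]
    simp_rw [Finset.mul_sum]
    refine Finset.sum_congr rfl fun j _ => ?_
    show γ * t j * (γ * t j) = γ * (γ * (s j * (cc X j ⬝ᵥ v) ^ 2))
    rcases hs j with h0 | h1
    · rw [ht]; simp only [h0]; ring
    · rw [ht]; simp only [h1]; ring
  have hYv : Y ⬝ᵥ v = v ⬝ᵥ v + γ * (v ⬝ᵥ (MM X s *ᵥ v)) := by
    rw [hY, add_dotProduct, smul_dotProduct, dotProduct_comm (MM X s *ᵥ v) v, smul_eq_mul]
  rw [e1, hRes, e2, cross, quad, hYv]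
  have hγ' : γ ≠ 0 := hγ.ne'
  field_simp
  ring

end Stmt4Aux

namespace Stmt4Aux

lemma dot_self_nonneg (x : Fin n → ℝ) : 0 ≤ x ⬝ᵥ x :=
  Finset.sum_nonneg fun i _ => mul_self_nonneg _

end Stmt4Aux


open Stmt4Aux

theorem stmt4 (n p k : ℕ) (hk1 : 1 ≤ k) (hkp : k ≤ p)
    (X : Matrix (Fin n) (Fin p) ℝ) (Y : Fin n → ℝ) (γ : ℝ) (hγ : 0 < γ) :
    ∃ c : ℝ,
      IsLeast
        ((fun w : Fin p → ℝ =>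
            (1 / (2 * γ)) * (w ⬝ᵥ w) + (1 / 2) * ((Y - X *ᵥ w) ⬝ᵥ (Y - X *ᵥ w))) ''
          {w | (Finset.univ.filter fun j => w j ≠ 0).card ≤ k}) c ∧
      IsLeast
        ((fun s : Fin p → ℝ =>
            (1 / 2) *
              (Y ⬝ᵥ (((1 : Matrix (Fin n) (Fin n) ℝ) +
                γ • ∑ j : Fin p, s j • vecMulVec (fun i => X i j) (fun i => X i j))⁻¹ *ᵥ Y))) ''
          {s | (∀ j, s j = 0 ∨ s j = 1) ∧ ∑ j, s j ≤ (k : ℝ)}) c := by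
  classical
  set F : (Fin p → ℝ) → ℝ := fun w =>
    (1 / (2 * γ)) * (w ⬝ᵥ w) + (1 / 2) * ((Y - X *ᵥ w) ⬝ᵥ (Y - X *ᵥ w)) with hF
  set G : (Fin p → ℝ) → ℝ := fun s =>
    (1 / 2) *
      (Y ⬝ᵥ (((1 : Matrix (Fin n) (Fin n) ℝ) +
        γ • ∑ j : Fin p, s j • vecMulVec (fun i => X i j) (fun i => X i j))⁻¹ *ᵥ Y)) with hG
  have hGA : ∀ s : Fin p → ℝ, G s = (1 / 2) * (Y ⬝ᵥ ((AA X γ s)⁻¹ *ᵥ Y)) := fun s => rfl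
  set S : Set (Fin p → ℝ) := {s | (∀ j, s j = 0 ∨ s j = 1) ∧ ∑ j, s j ≤ (k : ℝ)} with hS
  -- S is finite
  have hfin : S.Finite := by
    apply Set.Finite.subset (Set.Finite.pi (fun _ : Fin p => (Set.toFinite ({0, 1} : Set ℝ))))
    intro s hs
    intro j _
    rcases hs.1 j with h | h <;> simp [h]
  have h0S : (fun _ : Fin p => (0 : ℝ)) ∈ S :=
    ⟨fun j => Or.inl rfl, by simp⟩
  obtain ⟨s₀, hs₀S, hs₀min⟩ := Set.exists_min_image S G hfin ⟨_, h0S⟩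
  -- generic facts for s ∈ S
  have hnn : ∀ s ∈ S, ∀ j, 0 ≤ s j := by
    intro s hs j; rcases hs.1 j with h | h <;> simp [h]
  have hvs : ∀ s ∈ S, AA X γ s *ᵥ ((AA X γ s)⁻¹ *ᵥ Y) = Y :=
    fun s hs => AA_mulVec_inv X hγ (hnn s hs) Y
  -- the minimizer for a given s
  set wst : (Fin p → ℝ) → (Fin p → ℝ) :=
    fun s => γ • fun j => s j * (cc X j ⬝ᵥ ((AA X γ s)⁻¹ *ᵥ Y)) with hwst
  have hattain : ∀ s ∈ S, F (wst s) = G s := by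
    intro s hs
    have hk' := key X hγ hs.1 Y _ (hvs s hs) (wst s)
      (fun j hj => by simp [hwst, hj])
    rw [hF, hGA]
    beta_reduce
    have hzero : wst s - (γ • fun j => s j * (cc X j ⬝ᵥ ((AA X γ s)⁻¹ *ᵥ Y))) = 0 := by
      rw [hwst]; exact sub_self _
    rw [hk', hzero]
    simp
  have hsparse : ∀ s ∈ S, ((Finset.univ.filter fun j => wst s j ≠ 0).card : ℕ) ≤ k := by
    intro s hs
    have hsub : (Finset.univ.filter fun j => wst s j ≠ 0) ⊆
        (Finset.univ.filter fun j => s j = 1) := by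
      intro j hj
      simp only [Finset.mem_filter, Finset.mem_univ, true_and] at hj ⊢
      rcases hs.1 j with h | h
      · exact absurd (by simp [hwst, h]) hj
      · exact h
    have hcard : ((Finset.univ.filter fun j => s j = 1).card : ℝ) ≤ (k : ℝ) := by
      calc ((Finset.univ.filter fun j => s j = 1).card : ℝ)
          = ∑ j ∈ Finset.univ.filter fun j => s j = 1, s j := by
            rw [Finset.sum_congr rfl (fun j hj => (Finset.mem_filter.mp hj).2)]
            simp
        _ ≤ ∑ j, s j := Finset.sum_le_sum_of_subset_of_nonneg (Finset.filter_subset _ _)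
            (fun j _ _ => hnn s hs j)
        _ ≤ (k : ℝ) := hs.2
    exact le_trans (Nat.cast_le.mp (le_trans (Nat.cast_le.mpr (Finset.card_le_card hsub)) hcard))
      le_rfl
  -- lower bound
  have hlow : ∀ w : Fin p → ℝ, (Finset.univ.filter fun j => w j ≠ 0).card ≤ k →
      ∃ s ∈ S, G s ≤ F w := by
    intro w hw
    set s : Fin p → ℝ := fun j => if w j ≠ 0 then 1 else 0 with hsdef
    have hbin : ∀ j, s j = 0 ∨ s j = 1 := by
      intro j; by_cases h : w j ≠ 0 <;> simp [hsdef, h]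
    have hsum : ∑ j, s j ≤ (k : ℝ) := by
      rw [hsdef]
      simp only [Finset.sum_boole]
      exact_mod_cast hw
    have hsS : s ∈ S := ⟨hbin, hsum⟩
    refine ⟨s, hsS, ?_⟩
    have hk' := key X hγ hbin Y _ (hvs s hsS) w
      (fun j hj => by by_contra h; simp [hsdef, h] at hj)
    rw [hF, hGA]
    beta_reduce
    rw [hk']
    have h1 : 0 < 1 / (2 * γ) := by positivity
    have h2 := dot_self_nonneg (w - γ • fun j => s j * (cc X j ⬝ᵥ ((AA X γ s)⁻¹ *ᵥ Y)))
    have h3 := dot_self_nonneg (X *ᵥ (w - γ • fun j => s j * (cc X j ⬝ᵥ ((AA X γ s)⁻¹ *ᵥ Y))))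
    nlinarith
  refine ⟨G s₀, ⟨⟨wst s₀, hsparse s₀ hs₀S, ?_⟩, ?_⟩, ⟨⟨s₀, hs₀S, rfl⟩, ?_⟩⟩
  · exact hattain s₀ hs₀S
  · rintro y ⟨w, hw, rfl⟩
    obtain ⟨s, hsS, hle⟩ := hlow w hw
    exact le_trans (hs₀min s hsS) hle
  · rintro y ⟨s, hsS, rfl⟩
    exact hs₀min s hsS
end

section
/- For x ∈ R^p and integer 1 ≤ k ≤ p, the sum of the k largest components of x equals min { k·t + ∑_{j=1}^p u_j : t ∈ R, u ∈ R^p, u_j ≥ 0, u_j ≥ x_j − t for all j }. -/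
open Matrix

/-- Sum of the `k` largest components of `x`. -/
noncomputable def sumKLargest {p : ℕ} (x : Fin p → ℝ) (k : ℕ) : ℝ :=
  (((List.ofFn x).insertionSort (· ≥ ·)).take k).sum

private lemma sum_map_sub' (l : List ℝ) (t : ℝ) :
    (l.map (fun a => a - t)).sum = l.sum - l.length * t := by
  induction l with
  | nil => simp
  | cons a l ih => simp [ih]; ring

private lemma sum_max_eq (p : ℕ) (x : Fin p → ℝ) (f : ℝ → ℝ) :
    ∑ j, f (x j) = (((List.ofFn x).insertionSort (· ≥ ·)).map f).sum := by
  rw [((List.perm_insertionSort (· ≥ ·) (List.ofFn x)).map f).sum_eq,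
    List.map_ofFn, List.sum_ofFn]
  rfl

private lemma key_le (p k : ℕ) (hkp : k ≤ p) (x : Fin p → ℝ) (t : ℝ) :
    sumKLargest x k ≤ k * t + ∑ j, max (x j - t) 0 := by
  set l := (List.ofFn x).insertionSort (· ≥ ·) with hl
  have hlen : l.length = p := by simp [hl]
  rw [sum_max_eq p x (fun a => max (a - t) 0)]
  have hlen_take : (l.take k).length = k := by simp [hlen, hkp]
  have h1 : (l.take k).sum - k * t ≤ ((l.take k).map (fun a => max (a - t) 0)).sum := by
    calc (l.take k).sum - k * t = ((l.take k).map (fun a => a - t)).sum := by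
          rw [sum_map_sub' (l.take k) t, hlen_take]
      _ ≤ ((l.take k).map (fun a => max (a - t) 0)).sum :=
          List.sum_le_sum fun a _ => le_max_left _ _
  have h2 : (0:ℝ) ≤ ((l.drop k).map (fun a => max (a - t) 0)).sum := by
    apply List.sum_nonneg
    intro a ha
    simp only [List.mem_map] at ha
    obtain ⟨b, hb, rfl⟩ := ha
    exact le_max_right _ _
  have hms : (l.map (fun a => max (a - t) 0)).sum
      = ((l.take k).map (fun a => max (a - t) 0)).sum
        + ((l.drop k).map (fun a => max (a - t) 0)).sum := by
    conv_lhs => rw [← List.take_append_drop k l]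
    rw [List.map_append, List.sum_append]
  rw [sumKLargest, ← hl, hms]
  linarith

private lemma key_eq (p k : ℕ) (hk1 : 1 ≤ k) (hkp : k ≤ p) (x : Fin p → ℝ)
    (h : k - 1 < ((List.ofFn x).insertionSort (· ≥ ·)).length) :
    sumKLargest x k = k * ((List.ofFn x).insertionSort (· ≥ ·))[k-1]
      + ∑ j, max (x j - ((List.ofFn x).insertionSort (· ≥ ·))[k-1]) 0 := by
  set l := (List.ofFn x).insertionSort (· ≥ ·) with hl
  have hlen : l.length = p := by simp [hl]
  set t := l[k-1] with ht
  have hsorted : l.Pairwise (· ≥ ·) := List.pairwise_insertionSort _ _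
  rw [List.pairwise_iff_getElem] at hsorted
  have hge : ∀ i : ℕ, ∀ hi : i < l.length, i < k → t ≤ l[i] := by
    intro i hi hik
    rcases Nat.lt_or_ge i (k-1) with hlt | hge'
    · exact hsorted i (k-1) hi h hlt
    · have : i = k - 1 := by omega
      subst this; exact le_refl _
  have hle : ∀ i : ℕ, ∀ hi : i < l.length, k ≤ i → l[i] ≤ t := by
    intro i hi hik
    exact hsorted (k-1) i h hi (by omega)
  have hlen_take : (l.take k).length = k := by simp [hlen, hkp]
  have htake : (l.take k).map (fun a => max (a - t) 0) = (l.take k).map (fun a => a - t) := by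
    apply List.map_congr_left
    intro a ha
    obtain ⟨i, hi, rfl⟩ := List.mem_iff_getElem.mp ha
    rw [List.getElem_take]
    have : t ≤ l[i] := hge i (by omega) (by omega)
    simp [max_eq_left, sub_nonneg.mpr this]
  have hdrop : (l.drop k).map (fun a => max (a - t) 0) = (l.drop k).map (fun _ => (0:ℝ)) := by
    apply List.map_congr_left
    intro a ha
    obtain ⟨i, hi, rfl⟩ := List.mem_iff_getElem.mp ha
    rw [List.getElem_drop]
    have hi' : k + i < l.length := by
      have := hi; simp [List.length_drop] at this; omega
    have : l[k+i] ≤ t := hle (k+i) hi' (by omega)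
    simp [max_eq_right, sub_nonpos.mpr this]
  have hms : (l.map (fun a => max (a - t) 0)).sum
      = ((l.take k).map (fun a => max (a - t) 0)).sum
        + ((l.drop k).map (fun a => max (a - t) 0)).sum := by
    conv_lhs => rw [← List.take_append_drop k l]
    rw [List.map_append, List.sum_append]
  rw [sum_max_eq p x (fun a => max (a - t) 0), hms, htake, hdrop,
    sum_map_sub' (l.take k) t, hlen_take, sumKLargest, ← hl]
  simp

theorem stmt10 (p k : ℕ) (hk1 : 1 ≤ k) (hkp : k ≤ p) (x : Fin p → ℝ) :
    IsLeast
      ((fun tu : ℝ × (Fin p → ℝ) => (k : ℝ) * tu.1 + ∑ j, tu.2 j) ''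
        {tu | ∀ j, 0 ≤ tu.2 j ∧ x j - tu.1 ≤ tu.2 j})
      (sumKLargest x k) := by
  constructor
  · have h : k - 1 < ((List.ofFn x).insertionSort (· ≥ ·)).length := by
      simp [List.length_insertionSort]; omega
    set t := ((List.ofFn x).insertionSort (· ≥ ·))[k-1] with ht
    refine ⟨(t, fun j => max (x j - t) 0), ?_, ?_⟩
    · intro j
      exact ⟨le_max_right _ _, le_max_left _ _⟩
    · exact (key_eq p k hk1 hkp x h).symm
  · rintro y ⟨⟨t, u⟩, hmem, rfl⟩
    have h1 : ∑ j, max (x j - t) 0 ≤ ∑ j, u j :=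
      Finset.sum_le_sum fun j _ => max_le (hmem j).2 (hmem j).1
    have h2 := key_le p k hkp x t
    simp only
    linarith
end

section
/- Let K₁,…,K_p be positive semidefinite n×n matrices, Y ∈ R^n, γ > 0, and c(s) = (1/2) Yᵀ(I_n + γ∑_j s_j K_j)⁻¹Y. For any s, s̄ with entries in [0,1], the first-order underestimator inequality c(s) ≥ c(s̄) + ∇c(s̄)ᵀ(s − s̄) holds, where ∇c(s̄)_j = −(γ/2)·ᾱᵀK_jᾱ with ᾱ = (I_n + γ∑_j s̄_j K_j)⁻¹Y. -/
open Matrix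

lemma psd_smul {n : ℕ} {M : Matrix (Fin n) (Fin n) ℝ} (hM : M.PosSemidef) {a : ℝ}
    (ha : 0 ≤ a) : (a • M).PosSemidef := by
  refine .of_dotProduct_mulVec_nonneg ?_ (fun x => ?_)
  · rw [Matrix.IsHermitian, conjTranspose_smul, star_trivial, hM.1.eq]
  simp only [smul_mulVec, dotProduct_smul, smul_eq_mul, star_trivial]
  exact mul_nonneg ha (hM.dotProduct_mulVec_nonneg x)

lemma sum_mulVec' {m q : ℕ} (M : Fin q → Matrix (Fin m) (Fin m) ℝ) (v : Fin m → ℝ) :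
    (∑ j, M j) *ᵥ v = ∑ j, M j *ᵥ v := by
  ext i
  simp only [mulVec, dotProduct, Matrix.sum_apply, Finset.sum_apply, Finset.sum_mul]
  rw [Finset.sum_comm]

lemma dot_sum' {m q : ℕ} (u : Fin m → ℝ) (w : Fin q → Fin m → ℝ) :
    u ⬝ᵥ (∑ j, w j) = ∑ j, u ⬝ᵥ w j := by
  simp only [dotProduct, Finset.sum_apply, Finset.mul_sum]
  rw [Finset.sum_comm]

lemma psd_sum {m q : ℕ} (M : Fin q → Matrix (Fin m) (Fin m) ℝ)
    (h : ∀ j, (M j).PosSemidef) : (∑ j, M j).PosSemidef := by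
  refine .of_dotProduct_mulVec_nonneg ?_ (fun x => ?_)
  · rw [Matrix.IsHermitian, conjTranspose_sum]
    exact Finset.sum_congr rfl fun j _ => (h j).1.eq
  · rw [sum_mulVec', dot_sum']
    exact Finset.sum_nonneg fun j _ => (h j).dotProduct_mulVec_nonneg x

lemma key_ineq {n : ℕ} {A : Matrix (Fin n) (Fin n) ℝ} (hA : A.PosDef) (Y a : Fin n → ℝ) :
    Y ⬝ᵥ (A⁻¹ *ᵥ Y) ≥ 2 * (a ⬝ᵥ Y) - a ⬝ᵥ (A *ᵥ a) := by
  set b := A⁻¹ *ᵥ Y with hb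
  have hdet : IsUnit A.det := isUnit_iff_ne_zero.mpr hA.det_pos.ne'
  have hAb : A *ᵥ b = Y := by
    rw [hb, mulVec_mulVec, Matrix.mul_nonsing_inv _ hdet, one_mulVec]
  have hT : Aᵀ = A := by simpa using hA.isHermitian.eq
  have hsym : ∀ u v : Fin n → ℝ, u ⬝ᵥ (A *ᵥ v) = v ⬝ᵥ (A *ᵥ u) := by
    intro u v
    rw [Matrix.dotProduct_mulVec, ← Matrix.mulVec_transpose, hT, dotProduct_comm]
  have h0 : 0 ≤ (b - a) ⬝ᵥ (A *ᵥ (b - a)) := by simpa only [star_trivial] using hA.posSemidef.dotProduct_mulVec_nonneg (b - a)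
  have hexp : (b - a) ⬝ᵥ (A *ᵥ (b - a)) =
      b ⬝ᵥ Y - 2 * (a ⬝ᵥ Y) + a ⬝ᵥ (A *ᵥ a) := by
    rw [mulVec_sub, dotProduct_sub, sub_dotProduct, sub_dotProduct, hAb]
    rw [hsym b a, hAb]
    ring
  have hYb : Y ⬝ᵥ b = b ⬝ᵥ Y := dotProduct_comm _ _
  linarith [h0, hexp.symm.le]

theorem stmt15 (n p : ℕ) (K : Fin p → Matrix (Fin n) (Fin n) ℝ)
    (hK : ∀ j, (K j).PosSemidef) (Y : Fin n → ℝ) (γ : ℝ) (hγ : 0 < γ)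
    (s sbar : Fin p → ℝ) (hs : s ∈ Set.Icc (0 : Fin p → ℝ) 1)
    (hsbar : sbar ∈ Set.Icc (0 : Fin p → ℝ) 1) :
    letI c : (Fin p → ℝ) → ℝ := fun s' =>
      (1 / 2) * (Y ⬝ᵥ (((1 : Matrix (Fin n) (Fin n) ℝ) + γ • ∑ j, s' j • K j)⁻¹ *ᵥ Y))
    letI αbar : Fin n → ℝ :=
      ((1 : Matrix (Fin n) (Fin n) ℝ) + γ • ∑ j, sbar j • K j)⁻¹ *ᵥ Y
    c s ≥ c sbar + ∑ j, (-(γ / 2) * (αbar ⬝ᵥ (K j *ᵥ αbar))) * (s j - sbar j) := by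
  show (1 / 2) * (Y ⬝ᵥ (((1 : Matrix (Fin n) (Fin n) ℝ) + γ • ∑ j, s j • K j)⁻¹ *ᵥ Y)) ≥
    (1 / 2) * (Y ⬝ᵥ (((1 : Matrix (Fin n) (Fin n) ℝ) + γ • ∑ j, sbar j • K j)⁻¹ *ᵥ Y)) +
    ∑ j, (-(γ / 2) * ((((1 : Matrix (Fin n) (Fin n) ℝ) + γ • ∑ j, sbar j • K j)⁻¹ *ᵥ Y) ⬝ᵥ
      (K j *ᵥ (((1 : Matrix (Fin n) (Fin n) ℝ) + γ • ∑ j, sbar j • K j)⁻¹ *ᵥ Y)))) *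
      (s j - sbar j)
  set A : (Fin p → ℝ) → Matrix (Fin n) (Fin n) ℝ :=
    fun s' => (1 : Matrix (Fin n) (Fin n) ℝ) + γ • ∑ j, s' j • K j with hAdef
  set αbar : Fin n → ℝ := (A sbar)⁻¹ *ᵥ Y with hαdef
  have hApos : ∀ s' : Fin p → ℝ, s' ∈ Set.Icc (0 : Fin p → ℝ) 1 → (A s').PosDef := by
    intro s' hs'
    refine Matrix.PosDef.add_posSemidef Matrix.PosDef.one ?_
    exact psd_smul (psd_sum _ (fun j => psd_smul (hK j) (hs'.1 j))) hγ.le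
  have hB : (A sbar).PosDef := hApos sbar hsbar
  have hAs : (A s).PosDef := hApos s hs
  have hBα : A sbar *ᵥ αbar = Y := by
    rw [hαdef, mulVec_mulVec,
      Matrix.mul_nonsing_inv _ (isUnit_iff_ne_zero.mpr hB.det_pos.ne'), one_mulVec]
  set d : Fin p → ℝ := fun j => αbar ⬝ᵥ (K j *ᵥ αbar) with hd
  have hq : ∀ s' : Fin p → ℝ, αbar ⬝ᵥ (A s' *ᵥ αbar) =
      αbar ⬝ᵥ αbar + γ * ∑ j, s' j * d j := by
    intro s'
    rw [hAdef]
    simp only [add_mulVec, one_mulVec, smul_mulVec, sum_mulVec', dot_sum',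
      dotProduct_add, dotProduct_smul, smul_eq_mul, hd]
  have hkey := key_ineq hAs Y αbar
  have hαY : αbar ⬝ᵥ Y = αbar ⬝ᵥ αbar + γ * ∑ j, sbar j * d j := by
    rw [← hBα]; exact hq sbar
  have hcsbar : Y ⬝ᵥ ((A sbar)⁻¹ *ᵥ Y) = αbar ⬝ᵥ αbar + γ * ∑ j, sbar j * d j := by
    rw [← hαdef, dotProduct_comm, hαY]
  have hsum : ∑ j, (-(γ / 2) * d j) * (s j - sbar j) =
      -(γ / 2) * ((∑ j, s j * d j) - ∑ j, sbar j * d j) := by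
    rw [← Finset.sum_sub_distrib, Finset.mul_sum]
    exact Finset.sum_congr rfl fun j _ => by ring
  have hqs := hq s
  rw [hcsbar, hsum]
  nlinarith [hkey, hqs, hαY]
end
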